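/- Let N be a compact zero-dimensional Hausdorff topological group and let G be a dense subgroup of the product group N × ℝ such that every closed subgroup of G is locally pseudocompact. Then {e} × ℝ ⊆ G, where e is the identity of N. -/

import Mathlib

/-- A topological space is *pseudocompact* if every continuous real-valued function
on it is bounded. -/
def Pseudocompact (X : Type*) [TopologicalSpace X] : Prop :=
  ∀ f : X → ℝ, Continuous f → ∃ M : ℝ, ∀ x : X, |f x| ≤ M

/-- A topological additive group is *locally pseudocompact* if some neighborhood of the
identity has pseudocompact closure. -/
def AddLocallyPseudocompact (G : Type*) [AddGroup G] [TopologicalSpace G] : Prop :=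
  ∃ U ∈ nhds (0 : G), Pseudocompact (closure U)

open TopologicalSpace Set Function

section Psc

lemma Pseudocompact.of_surjective {X Y : Type*} [TopologicalSpace X] [TopologicalSpace Y]
    (hX : Pseudocompact X) {f : X → Y} (hf : Continuous f) (hs : Surjective f) :
    Pseudocompact Y := by
  intro g hg
  obtain ⟨M, hM⟩ := hX (g ∘ f) (hg.comp hf)
  refine ⟨M, fun y => ?_⟩
  obtain ⟨x, rfl⟩ := hs y
  exact hM x

/-- Feeble compactness: in a pseudocompact space admitting enough separating functions,
a decreasing sequence of nonempty open sets has a cluster point. -/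
lemma Pseudocompact.exists_mem_closure {X : Type*} [TopologicalSpace X]
    (hX : Pseudocompact X) (R : ℕ → Set X)
    (hopen : ∀ n, IsOpen (R n)) (hne : ∀ n, (R n).Nonempty)
    (hdec : ∀ m n, m ≤ n → R n ⊆ R m)
    (hsep : ∀ (p : X) (U : Set X), IsOpen U → p ∈ U →
      ∃ f : X → ℝ, Continuous f ∧ f p = 1 ∧ (∀ x, x ∉ U → f x = 0) ∧ ∀ x, 0 ≤ f x) :
    ∃ x, ∀ n, x ∈ closure (R n) := by
  by_contra hcon
  push_neg at hcon
  choose p hp using hne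
  choose f hfc hfp hf0 hfnn using fun n => hsep (p n) (R n) (hopen n) (hp n)
  set F : ℕ → X → ℝ := fun n x => (n : ℝ) * f n x with hF
  have hsupp : ∀ n, support (F n) ⊆ R n := by
    intro n x hx
    by_contra hxR
    exact hx (by simp [hF, hf0 n x hxR])
  have hlf : LocallyFinite fun n => support (F n) := by
    intro x
    obtain ⟨m, hm⟩ := hcon x
    refine ⟨(closure (R m))ᶜ, (isClosed_closure (s := R m)).isOpen_compl.mem_nhds hm, ?_⟩
    apply (Set.finite_Iio m).subset
    rintro n ⟨y, hy1, hy2⟩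
    by_contra hn
    exact hy2 (subset_closure (hdec m n (le_of_not_gt hn) (hsupp n hy1)))
  have hcont : Continuous fun x => ∑ᶠ n, F n x :=
    continuous_finsum (fun n => (continuous_const.mul (hfc n))) hlf
  obtain ⟨M, hM⟩ := hX _ hcont
  obtain ⟨n, hn⟩ := exists_nat_gt M
  have hfin : (support fun m => F m (p n)).Finite := by
    have := hlf.point_finite (p n)
    simpa [support] using this
  have hsub : (support fun m => F m (p n)) ⊆ ↑hfin.toFinset := by
    intro m hm; simpa using hm
  have hval : (n : ℝ) ≤ ∑ᶠ m, F m (p n) := by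
    rw [finsum_eq_sum_of_support_subset _ hsub]
    rcases eq_or_ne n 0 with rfl | hn0
    · rw [Nat.cast_zero]
      apply Finset.sum_nonneg
      intro i _
      exact mul_nonneg (Nat.cast_nonneg i) (hfnn i _)
    · have hmem : n ∈ hfin.toFinset := by
        simp only [Set.Finite.mem_toFinset, mem_support, hF]
        rw [hfp n]
        simpa using hn0
      have : F n (p n) = (n : ℝ) := by simp [hF, hfp n]
      calc (n : ℝ) = F n (p n) := this.symm
        _ ≤ ∑ m ∈ hfin.toFinset, F m (p n) :=
            Finset.single_le_sum (f := fun m => F m (p n)) (fun i _ => mul_nonneg (Nat.cast_nonneg i) (hfnn i (p n))) hmem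
  have := hM (p n)
  have h1 : ∑ᶠ m, F m (p n) ≤ M := (abs_le.mp this).2
  linarith

end Psc

open TopologicalSpace Set Function
set_option linter.unusedSectionVars false

section Grp

variable {P : Type*} [AddGroup P] [TopologicalSpace P] [IsTopologicalAddGroup P] [CompactSpace P]

lemma fst_nsmul' {α β : Type*} [AddMonoid α] [AddMonoid β] (p : α × β) (m : ℕ) :
    (m • p).1 = m • p.1 := by
  induction m with
  | zero => simp
  | succ k ih => simp [succ_nsmul, ih]

lemma snd_nsmul' {α β : Type*} [AddMonoid α] [AddMonoid β] (p : α × β) (m : ℕ) :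
    (m • p).2 = m • p.2 := by
  induction m with
  | zero => simp
  | succ k ih => simp [succ_nsmul, ih]

omit [TopologicalSpace P] [IsTopologicalAddGroup P] [CompactSpace P] in
lemma exists_small_nsmul_mem (O : AddSubgroup P) [hfin : Finite (P ⧸ O)] (x : P) :
    ∃ k : ℕ, 0 < k ∧ k ≤ Nat.card (P ⧸ O) ∧ k • x ∈ O := by
  set c := Nat.card (P ⧸ O) with hc
  have hni : ¬ Injective (fun i : Fin (c + 1) => (((i : ℕ) • x : P) : P ⧸ O)) := by
    intro hinj
    have h1 := Nat.card_le_card_of_injective _ hinj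
    have h2 : Nat.card (Fin (c + 1)) = c + 1 := by simp
    omega
  rw [Injective] at hni
  push_neg at hni
  obtain ⟨i, j, hij, hne⟩ := hni
  have key : ∀ a b : Fin (c + 1), (a : ℕ) < (b : ℕ) →
      ((((a : ℕ) • x : P) : P ⧸ O) = (((b : ℕ) • x : P) : P ⧸ O)) →
      ∃ k : ℕ, 0 < k ∧ k ≤ c ∧ k • x ∈ O := by
    intro a b hab heq
    refine ⟨(b : ℕ) - (a : ℕ), by omega, by have := b.isLt; omega, ?_⟩
    have hmem : -((a : ℕ) • x) + ((b : ℕ) • x) ∈ O := QuotientAddGroup.eq.mp heq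
    have hsplit : ((b : ℕ)) • x = (a : ℕ) • x + ((b : ℕ) - (a : ℕ)) • x := by
      rw [← add_nsmul]
      congr 1
      omega
    rw [hsplit, neg_add_cancel_left] at hmem
    exact hmem
  have hne' : (i : ℕ) ≠ (j : ℕ) := fun h => hne (Fin.ext h)
  rcases hne'.lt_or_gt with h | h
  · exact key i j h hij
  · exact key j i h hij.symm

lemma exists_nsmul_mem (O : AddSubgroup P) (hO : IsOpen (O : Set P)) :
    ∃ m : ℕ, 0 < m ∧ ∀ x : P, m • x ∈ O := by
  haveI hfin : Finite (P ⧸ O) := AddSubgroup.quotient_finite_of_isOpen O hO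
  set c := Nat.card (P ⧸ O) with hc
  refine ⟨c.factorial, Nat.factorial_pos c, fun x => ?_⟩
  obtain ⟨k, hk0, hkc, hkm⟩ := exists_small_nsmul_mem O x
  obtain ⟨d, hd⟩ := Nat.dvd_factorial hk0 hkc
  rw [hd, mul_nsmul]
  exact O.nsmul_mem hkm d

/-- In a compact T2 zero-dimensional group, the intersection of all open subgroups
is trivial. -/
lemma mem_openSubgroups_eq_zero [T2Space P]
    (hzd : ∀ U : Set P, IsOpen U → (0 : P) ∈ U → ∃ W, IsClopen W ∧ (0 : P) ∈ W ∧ W ⊆ U) {z : P}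
    (hz : ∀ O : AddSubgroup P, IsOpen (O : Set P) → z ∈ O) : z = 0 := by
  by_contra hzne
  have h0 : (0 : P) ∈ ({z}ᶜ : Set P) := by simpa using (Ne.symm hzne)
  obtain ⟨W, hWc, h0W, hWsub⟩ := hzd _ (isOpen_compl_singleton) h0
  obtain ⟨H, hH⟩ := IsTopologicalAddGroup.exist_openAddSubgroup_sub_clopen_nhds_of_zero hWc h0W
  have := hz H.toAddSubgroup H.isOpen
  exact hWsub (hH this) rfl

end Grp

section L2

variable {N : Type*} [AddGroup N] [TopologicalSpace N] [IsTopologicalAddGroup N]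
  [CompactSpace N] [T2Space N]

/-- Key structural lemma: a closed subgroup of `N × ℝ` with dense second projection
contains the line `{0} × ℝ`. -/
lemma line_mem_of_closed (hzd : IsTopologicalBasis {s : Set N | IsClopen s})
    (L : AddSubgroup (N × ℝ)) (hLc : IsClosed (L : Set (N × ℝ)))
    (hd : Dense (Prod.snd '' (L : Set (N × ℝ)))) (t : ℝ) : ((0 : N), t) ∈ L := by
  -- snd image is closed, hence all of ℝ
  have himg : Prod.snd '' (L : Set (N × ℝ)) = univ := by
    have hcl : IsClosed (Prod.snd '' (L : Set (N × ℝ))) :=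
      isClosedMap_snd_of_compactSpace _ hLc
    rw [← hcl.closure_eq]
    exact hd.closure_eq
  have hsurj : ∀ s : ℝ, ∃ x : N, (x, s) ∈ L := by
    intro s
    have : s ∈ Prod.snd '' (L : Set (N × ℝ)) := by rw [himg]; trivial
    obtain ⟨z, hz, hz2⟩ := this
    exact ⟨z.1, by rwa [← hz2, Prod.mk.eta]⟩
  -- for each open subgroup O, a witness in O
  have hO : ∀ O : AddSubgroup N, IsOpen (O : Set N) → ∃ x : N, x ∈ O ∧ (x, t) ∈ L := by
    intro O hOo
    obtain ⟨m, hm0, hmx⟩ := exists_nsmul_mem O hOo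
    obtain ⟨x', hx'⟩ := hsurj (t / m)
    refine ⟨m • x', hmx x', ?_⟩
    have hmem := L.nsmul_mem hx' m
    have heq : m • ((x', t / m) : N × ℝ) = (m • x', t) := by
      apply Prod.ext
      · rw [fst_nsmul']
      · rw [snd_nsmul']
        simp only
        rw [nsmul_eq_mul, mul_div_cancel₀]
        exact_mod_cast hm0.ne'
    rwa [heq] at hmem
  -- compactness
  set Z : {O : AddSubgroup N // IsOpen (O : Set N)} → Set N :=
    fun O => {x : N | x ∈ O.1 ∧ (x, t) ∈ L} with hZ
  haveI : Nonempty {O : AddSubgroup N // IsOpen (O : Set N)} :=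
    ⟨⟨⊤, by simp⟩⟩
  have hZclosed : ∀ O, IsClosed (Z O) := by
    rintro ⟨O, hOo⟩
    have h1 : IsClosed (O : Set N) := O.isClosed_of_isOpen hOo
    have h2 : IsClosed {x : N | (x, t) ∈ L} :=
      hLc.preimage (Continuous.prodMk_left t)
    exact h1.inter h2
  have hZne : ∀ O, (Z O).Nonempty := by
    rintro ⟨O, hOo⟩
    obtain ⟨x, hx1, hx2⟩ := hO O hOo
    exact ⟨x, hx1, hx2⟩
  have hdir : Directed (fun x1 x2 => x1 ⊇ x2) Z := by
    rintro ⟨O1, h1⟩ ⟨O2, h2⟩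
    refine ⟨⟨O1 ⊓ O2, ?_⟩, ?_, ?_⟩
    · exact (h1.inter h2)
    · rintro x ⟨hx1, hx2⟩; exact ⟨hx1.1, hx2⟩
    · rintro x ⟨hx1, hx2⟩; exact ⟨hx1.2, hx2⟩
  obtain ⟨z, hzmem⟩ := IsCompact.nonempty_iInter_of_directed_nonempty_isCompact_isClosed
    Z hdir hZne (fun O => (hZclosed O).isCompact) hZclosed
  simp only [Set.mem_iInter] at hzmem
  have hz0 : z = 0 := by
    apply mem_openSubgroups_eq_zero
      (fun U hU h0 => by
        obtain ⟨W, hW, h1, h2⟩ := hzd.exists_subset_of_mem_open h0 hU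
        exact ⟨W, hW, h1, h2⟩)
    intro O hOo
    exact (hzmem ⟨O, hOo⟩).1
  have := (hzmem ⟨⊤, by simp⟩).2
  rwa [hz0] at this

end L2

section Countability

variable {P : Type*} [AddGroup P] [TopologicalSpace P] [IsTopologicalAddGroup P] [CompactSpace P]

/-- A compact group with a dense 2-generated subgroup has countably many open subgroups. -/
lemma countable_openSubgroups (x1 x2 : P)
    (hdense : Dense ((AddSubgroup.closure ({x1, x2} : Set P) : AddSubgroup P) : Set P)) :
    Countable {O : AddSubgroup P // IsOpen (O : Set P)} := by
  classical
  set D := AddSubgroup.closure ({x1, x2} : Set P) with hD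
  set S := {O : AddSubgroup P // IsOpen (O : Set P)} with hS
  have hex : ∀ O : S, ∃ m : ℕ, Nonempty (P ⧸ O.1 ≃ Fin m) := by
    intro O
    haveI : Finite (P ⧸ O.1) := AddSubgroup.quotient_finite_of_isOpen O.1 O.2
    exact Finite.exists_equiv_fin _
  choose n hn using hex
  have e : ∀ O : S, P ⧸ O.1 ≃ Fin (n O) := fun O => (hn O).some
  -- the encoded action
  set sig : ∀ O : S, P → ℕ → ℕ := fun O d j =>
    if h : j < n O then ((e O) (d +ᵥ (e O).symm ⟨j, h⟩)).val else 0 with hsig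
  set bpt : ∀ O : S, ℕ := fun O => ((e O) ((0 : P) : P ⧸ O.1)).val with hbpt
  have hlt : ∀ (O : S) (d : P) (j : ℕ), j < n O → sig O d j < n O := by
    intro O d j h
    simp only [hsig, dif_pos h]
    exact Fin.isLt _
  have hval : ∀ (O : S) (d : P) (j : ℕ) (h : j < n O),
      sig O d j = ((e O) (d +ᵥ (e O).symm ⟨j, h⟩)).val := by
    intro O d j h
    simp only [hsig, dif_pos h]
  have hcomp : ∀ (O : S) (a b : P) (j : ℕ), j < n O →
      sig O (a + b) j = sig O a (sig O b j) := by
    intro O a b j h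
    have h2 : sig O b j < n O := hlt O b j h
    have e1 := hval O (a+b) j h
    have e2 := hval O b j h
    have e3 := hval O a (sig O b j) h2
    rw [e1, e3]
    have hfe : (⟨sig O b j, h2⟩ : Fin (n O)) = (e O) (b +ᵥ (e O).symm ⟨j, h⟩) :=
      Fin.ext (by simpa using e2)
    rw [hfe, Equiv.symm_apply_apply, add_vadd]
  have hzero : ∀ (O : S) (j : ℕ), j < n O → sig O 0 j = j := by
    intro O j h
    rw [hval O 0 j h, zero_vadd, Equiv.apply_symm_apply]
  have hinj : ∀ (O : S) (d : P) (a b : ℕ), a < n O → b < n O →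
      sig O d a = sig O d b → a = b := by
    intro O d a b ha hb hab
    rw [hval O d a ha, hval O d b hb] at hab
    have h1 : d +ᵥ (e O).symm ⟨a, ha⟩ = d +ᵥ (e O).symm ⟨b, hb⟩ :=
      (e O).injective (Fin.ext hab)
    have h2 : (e O).symm ⟨a, ha⟩ = (e O).symm ⟨b, hb⟩ := by
      have := congrArg (fun z => (-d) +ᵥ z) h1
      simpa [← add_vadd] using this
    have := (e O).symm.injective h2
    exact congrArg Fin.val this
  have hblt : ∀ O : S, bpt O < n O := fun O => Fin.isLt _
  have hmem : ∀ (O : S) (d : P), d ∈ O.1 ↔ sig O d (bpt O) = bpt O := by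
    intro O d
    have hb := hblt O
    rw [hval O d _ hb]
    have : (⟨bpt O, hb⟩ : Fin (n O)) = (e O) ((0 : P) : P ⧸ O.1) := by
      apply Fin.ext; simp [hbpt]
    rw [this, Equiv.symm_apply_apply]
    have hvadd : (d +ᵥ ((0 : P) : P ⧸ O.1)) = ((d + 0 : P) : P ⧸ O.1) := rfl
    rw [hvadd, add_zero]
    constructor
    · intro hd
      have : ((d : P) : P ⧸ O.1) = ((0 : P) : P ⧸ O.1) := by
        rw [QuotientAddGroup.eq]; simpa using hd
      rw [this]
    · intro hv
      have : ((d : P) : P ⧸ O.1) = ((0 : P) : P ⧸ O.1) := by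
        apply (e O).injective
        exact Fin.ext (by simpa [hbpt] using hv)
      have := QuotientAddGroup.eq.mp this
      simpa using this
  -- the data map
  set data : S → ℕ × List ℕ × List ℕ × ℕ := fun O =>
    (n O, List.ofFn (fun i : Fin (n O) => sig O x1 i.val),
      List.ofFn (fun i : Fin (n O) => sig O x2 i.val), bpt O) with hdata
  have hinjdata : Function.Injective data := by
    intro O O' heq
    obtain ⟨hn1, hl1, hl2, hb⟩ : n O = n O' ∧ _ ∧ _ ∧ bpt O = bpt O' := by
      rw [Prod.ext_iff, Prod.ext_iff, Prod.ext_iff] at heq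
      exact ⟨heq.1, heq.2.1, heq.2.2.1, heq.2.2.2⟩
    have hgen : ∀ x ∈ ({x1, x2} : Set P), ∀ j, j < n O → sig O x j = sig O' x j := by
      intro x hx j hj
      have hj' : j < n O' := hn1 ▸ hj
      rcases hx with rfl | hx
      · have g1 : (List.ofFn (fun i : Fin (n O) => sig O x i.val)).get
            ⟨j, by rw [List.length_ofFn]; exact hj⟩ = sig O x j := by
          simp [List.get_ofFn]
        have g2 : (List.ofFn (fun i : Fin (n O') => sig O' x i.val)).get
            ⟨j, by rw [List.length_ofFn]; exact hj'⟩ = sig O' x j := by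
          simp [List.get_ofFn]
        rw [← g1, ← g2, List.get_of_eq hl1]
      · rcases hx with rfl
        have g1 : (List.ofFn (fun i : Fin (n O) => sig O x i.val)).get
            ⟨j, by rw [List.length_ofFn]; exact hj⟩ = sig O x j := by
          simp [List.get_ofFn]
        have g2 : (List.ofFn (fun i : Fin (n O') => sig O' x i.val)).get
            ⟨j, by rw [List.length_ofFn]; exact hj'⟩ = sig O' x j := by
          simp [List.get_ofFn]
        rw [← g1, ← g2, List.get_of_eq hl2]
    -- closure induction
    have hQ : ∀ d ∈ D, ∀ j, j < n O → sig O d j = sig O' d j := by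
      intro d hd
      induction hd using AddSubgroup.closure_induction with
      | mem x hx => exact hgen x hx
      | zero =>
          intro j hj
          rw [hzero O j hj, hzero O' j (hn1 ▸ hj)]
      | add a b ha hb iha ihb =>
          intro j hj
          have hj' : j < n O' := hn1 ▸ hj
          have h2 : sig O b j < n O := hlt O b j hj
          rw [hcomp O a b j hj, hcomp O' a b j hj', ihb j hj]
          have h2' : sig O' b j < n O := by rw [← ihb j hj]; exact h2
          exact iha _ h2'
      | neg a ha iha =>
          intro j hj
          have hj' : j < n O' := hn1 ▸ hj
          -- sig O (-a) j is the unique k < n O with sig O a k = j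
          have hk1 : sig O a (sig O (-a) j) = j := by
            rw [← hcomp O a (-a) j hj]
            simpa using hzero O j hj
          have hk2 : sig O' a (sig O' (-a) j) = j := by
            rw [← hcomp O' a (-a) j hj']
            simpa using hzero O' j hj'
          have hlt1 : sig O (-a) j < n O := hlt O (-a) j hj
          have hlt2 : sig O' (-a) j < n O' := hlt O' (-a) j hj'
          have hlt2' : sig O' (-a) j < n O := hn1 ▸ hlt2
          have : sig O a (sig O' (-a) j) = j := by
            rw [iha _ hlt2']
            rw [hn1] at hlt2'
            exact hk2
          exact hinj O a _ _ hlt1 hlt2' (by rw [hk1, this])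
    -- conclude equality of subgroups
    have hsub : ∀ (A B : S), n A = n B → bpt A = bpt B →
        (∀ d ∈ D, ∀ j, j < n A → sig A d j = sig B d j) → A.1 ≤ B.1 := by
      intro A B hnAB hbAB hQ'
      intro d hd
      have hclosed : IsClosed (B.1 : Set P) := B.1.isClosed_of_isOpen B.2
      have h1 : (A.1 : Set P) ⊆ closure ((A.1 : Set P) ∩ (D : Set P)) :=
        hdense.open_subset_closure_inter A.2
      have h2 : (A.1 : Set P) ∩ (D : Set P) ⊆ (B.1 : Set P) := by
        rintro z ⟨hz1, hz2⟩
        have hzA : sig A z (bpt A) = bpt A := (hmem A z).mp hz1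
        have := hQ' z hz2 (bpt A) (hblt A)
        apply (hmem B z).mpr
        rw [← hbAB, ← this, hzA]
      have := (closure_mono h2).trans_eq hclosed.closure_eq
      exact this (h1 hd)
    have hle1 : O.1 ≤ O'.1 := hsub O O' hn1 hb hQ
    have hle2 : O'.1 ≤ O.1 := by
      apply hsub O' O hn1.symm hb.symm
      intro d hd j hj
      exact (hQ d hd j (hn1.symm ▸ hj)).symm
    exact Subtype.ext (le_antisymm hle1 hle2)
  exact hinjdata.countable

end Countability

section Sep

variable {N : Type*} [AddGroup N] [TopologicalSpace N] [IsTopologicalAddGroup N]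
  [CompactSpace N] [T2Space N]

/-- Separation of disjoint compact sets by a clopen set in a zero-dimensional space. -/
lemma clopen_separation (hzd : IsTopologicalBasis {s : Set N | IsClopen s})
    {K K' : Set N} (hK : IsCompact K) (hK'c : IsClosed K') (hd : Disjoint K K') :
    ∃ U : Set N, IsClopen U ∧ K ⊆ U ∧ Disjoint U K' := by
  have hcov : ∀ x ∈ K, ∃ V : Set N, IsClopen V ∧ x ∈ V ∧ V ⊆ K'ᶜ := by
    intro x hx
    have hxK' : x ∈ K'ᶜ := fun hc => (Set.disjoint_left.mp hd hx) hc
    obtain ⟨V, hV, h1, h2⟩ := hzd.exists_subset_of_mem_open hxK' hK'c.isOpen_compl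
    exact ⟨V, hV, h1, h2⟩
  choose V hVc hVx hVs using hcov
  obtain ⟨s, hs⟩ := hK.elim_nhds_subcover' (fun x hx => V x hx)
    (fun x hx => (hVc x hx).2.mem_nhds (hVx x hx))
  refine ⟨⋃ x ∈ s, V x x.2, ?_, ?_, ?_⟩
  · apply Set.Finite.isClopen_biUnion s.finite_toSet
    intro x _; exact hVc x x.2
  · intro z hz
    obtain ⟨x, hx1, hx2⟩ := Set.mem_iUnion₂.mp (hs hz)
    exact Set.mem_biUnion hx1 hx2
  · rw [Set.disjoint_left]
    intro z hz hz'
    obtain ⟨x, _, hx2⟩ := Set.mem_iUnion₂.mp hz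
    exact (hVs x x.2 hx2) hz'

/-- Separating continuous functions on subsets of `N × ℝ`. -/
lemma sep_functions (hzd : IsTopologicalBasis {s : Set N | IsClopen s})
    (C : Set (N × ℝ)) (p : ↥C) (U : Set ↥C) (hU : IsOpen U) (hp : p ∈ U) :
    ∃ f : ↥C → ℝ, Continuous f ∧ f p = 1 ∧ (∀ x, x ∉ U → f x = 0) ∧ ∀ x, 0 ≤ f x := by
  obtain ⟨U', hU', hUeq⟩ := isOpen_induced_iff.mp hU
  have hpU' : ((p : N × ℝ).1, (p : N × ℝ).2) ∈ U' := by
    rw [Prod.mk.eta]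
    rw [← hUeq] at hp
    exact hp
  obtain ⟨W, I, hW, hI, hpW, hpI, hWI⟩ := isOpen_prod_iff.mp hU' _ _ hpU'
  obtain ⟨V, hVc, hpV, hVW⟩ := hzd.exists_subset_of_mem_open hpW hW
  obtain ⟨δ, hδ0, hball⟩ := Metric.isOpen_iff.mp hI _ hpI
  classical
  set c := (p : N × ℝ).2 with hc
  set f0 : N × ℝ → ℝ := fun z => (if z.1 ∈ V then (1:ℝ) else 0) * max 0 (1 - |z.2 - c| / δ)
    with hf0
  have hind : Continuous fun z : N × ℝ => (if z.1 ∈ V then (1:ℝ) else 0) := by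
    rw [continuous_iff_continuousAt]
    intro z
    rcases em (z.1 ∈ V) with hz | hz
    · have heq : (fun _ : N × ℝ => (1:ℝ)) =ᶠ[nhds z]
          (fun w : N × ℝ => if w.1 ∈ V then (1:ℝ) else 0) :=
        Filter.eventuallyEq_of_mem ((hVc.2.preimage continuous_fst).mem_nhds hz)
          (fun w hw => (if_pos hw).symm)
      exact continuousAt_const.congr heq
    · have heq : (fun _ : N × ℝ => (0:ℝ)) =ᶠ[nhds z]
          (fun w : N × ℝ => if w.1 ∈ V then (1:ℝ) else 0) :=
        Filter.eventuallyEq_of_mem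
          (((hVc.1.isOpen_compl).preimage continuous_fst).mem_nhds hz)
          (fun w hw => (if_neg hw).symm)
      exact continuousAt_const.congr heq
  have hcont0 : Continuous f0 := by
    apply hind.mul
    apply continuous_const.max
    apply continuous_const.sub
    exact ((continuous_snd.sub continuous_const).abs).div_const δ
  refine ⟨fun x => f0 ↑x, hcont0.comp continuous_subtype_val, ?_, ?_, ?_⟩
  · simp only [hf0, if_pos hpV, ← hc, sub_self, abs_zero, zero_div, sub_zero, one_mul]
    exact max_eq_right zero_le_one
  · intro x hx
    by_contra hfx
    have h1 : (x : N × ℝ).1 ∈ V := by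
      by_contra h
      exact hfx (by simp [hf0, h])
    have h2 : |(x : N × ℝ).2 - c| < δ := by
      by_contra h
      push_neg at h
      apply hfx
      have : 1 - |(x : N × ℝ).2 - c| / δ ≤ 0 := by
        rw [sub_nonpos]
        rw [le_div_iff₀ hδ0]
        linarith
      simp [hf0, max_eq_left this]
    apply hx
    rw [← hUeq]
    show (x : N × ℝ) ∈ U'
    have : ((x : N × ℝ).1, (x : N × ℝ).2) ∈ W ×ˢ I := by
      constructor
      · exact hVW h1
      · exact hball (by simpa [Metric.mem_ball, Real.dist_eq] using h2)
    rw [Prod.mk.eta] at this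
    exact hWI this
  · intro x
    apply mul_nonneg
    · split <;> norm_num
    · exact le_max_left 0 _

end Sep


section Extract

variable {N : Type*} [AddGroup N] [TopologicalSpace N] [IsTopologicalAddGroup N]

lemma extract_psc (G : AddSubgroup (N × ℝ))
    (hG : ∀ H : AddSubgroup G, IsClosed (H : Set G) → AddLocallyPseudocompact H)
    (F : AddSubgroup (N × ℝ)) (hF : IsClosed (F : Set (N × ℝ))) :
    ∃ C : Set (N × ℝ), (C ⊆ (G : Set (N × ℝ)) ∩ F) ∧ Pseudocompact ↥C ∧
      ∃ V ∈ nhds (0 : N × ℝ),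
        ∀ z : N × ℝ, z ∈ G → z ∈ F → z ∈ V → z ∈ C := by
  set H : AddSubgroup G := F.addSubgroupOf G with hH
  have hHc : IsClosed (H : Set G) := by
    have heq : (H : Set G) = (Subtype.val : G → N × ℝ) ⁻¹' (F : Set (N × ℝ)) := by
      ext x
      simp [hH, AddSubgroup.mem_addSubgroupOf]
    rw [heq]
    exact hF.preimage continuous_subtype_val
  obtain ⟨U, hU, hpsc⟩ := hG H hHc
  obtain ⟨V₁, hV₁, hV₁sub⟩ := (mem_nhds_subtype (H : Set G) 0 U).mp hU
  have h0G : ((0 : H) : G) = (0 : G) := rfl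
  rw [h0G] at hV₁
  obtain ⟨V, hV, hVsub⟩ := (mem_nhds_subtype (G : Set (N × ℝ)) 0 V₁).mp hV₁
  have h0NR : ((0 : G) : N × ℝ) = (0 : N × ℝ) := rfl
  rw [h0NR] at hV
  refine ⟨(fun h : H => ((h : G) : N × ℝ)) '' (closure U), ?_, ?_, V, hV, ?_⟩
  · rintro z ⟨h, _, rfl⟩
    exact ⟨(h : G).2, (AddSubgroup.mem_addSubgroupOf).mp h.2⟩
  · apply hpsc.of_surjective (f := fun w : ↥(closure U) =>
      (⟨((w.1 : G) : N × ℝ), ⟨w.1, w.2, rfl⟩⟩ : ↥((fun h : H => ((h : G) : N × ℝ)) '' (closure U))))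
    · exact Continuous.subtype_mk
        (continuous_subtype_val.comp (continuous_subtype_val.comp continuous_subtype_val)) _
    · rintro ⟨z, h, hh, rfl⟩
      exact ⟨⟨h, hh⟩, rfl⟩
  · intro z hzG hzF hzV
    have hzH : (⟨⟨z, hzG⟩, (AddSubgroup.mem_addSubgroupOf).mpr hzF⟩ : H) ∈ U := by
      apply hV₁sub
      show (⟨z, hzG⟩ : G) ∈ V₁
      apply hVsub
      exact hzV
    exact ⟨_, subset_closure hzH, rfl⟩

end Extract

section ClopenSeq

variable {N : Type*} [AddGroup N] [TopologicalSpace N] [IsTopologicalAddGroup N]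
  [CompactSpace N] [T2Space N]

lemma exists_clopen_seq (hzd : IsTopologicalBasis {s : Set N | IsClopen s}) (x1 x2 : N) :
    ∃ u : ℕ → Set N, (∀ n, IsClopen (u n)) ∧ (∀ n, (0:N) ∈ u n) ∧
      ∀ z : N, z ∈ ((AddSubgroup.closure ({x1, x2} : Set N)).topologicalClosure : Set N) →
        (∀ n, z ∈ u n) → z = 0 := by
  classical
  set D0 := AddSubgroup.closure ({x1, x2} : Set N) with hD0
  set A := D0.topologicalClosure with hA
  have hAclosed : IsClosed (A : Set N) := D0.isClosed_topologicalClosure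
  haveI hAcomp : CompactSpace ↥A := isCompact_iff_compactSpace.mp hAclosed.isCompact
  have hx1A : x1 ∈ A := D0.le_topologicalClosure (AddSubgroup.subset_closure (by simp))
  have hx2A : x2 ∈ A := D0.le_topologicalClosure (AddSubgroup.subset_closure (by simp))
  set a1 : ↥A := ⟨x1, hx1A⟩
  set a2 : ↥A := ⟨x2, hx2A⟩
  have himg : Subtype.val '' ((AddSubgroup.closure ({a1, a2} : Set ↥A) : AddSubgroup ↥A) : Set ↥A)
      = (D0 : Set N) := by
    have h1 : AddSubgroup.map A.subtype (AddSubgroup.closure ({a1, a2} : Set ↥A)) = D0 := by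
      rw [AddMonoidHom.map_closure]
      congr 1
      rw [Set.image_insert_eq, Set.image_singleton]
      rfl
    have h2 := congrArg (fun (S : AddSubgroup N) => (S : Set N)) h1
    simpa [AddSubgroup.coe_map] using h2
  have hdense : Dense ((AddSubgroup.closure ({a1, a2} : Set ↥A) : AddSubgroup ↥A) : Set ↥A) := by
    intro z
    rw [closure_subtype, himg]
    have hset : (A : Set N) = closure (D0 : Set N) := AddSubgroup.topologicalClosure_coe
    have : (z : N) ∈ (A : Set N) := z.2
    rwa [hset] at this
  haveI hcnt : Countable {O : AddSubgroup ↥A // IsOpen (O : Set ↥A)} :=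
    countable_openSubgroups a1 a2 hdense
  haveI hnon : Nonempty {O : AddSubgroup ↥A // IsOpen (O : Set ↥A)} :=
    ⟨⟨⊤, by rw [AddSubgroup.coe_top]; exact isOpen_univ⟩⟩
  obtain ⟨g, hg⟩ := exists_surjective_nat {O : AddSubgroup ↥A // IsOpen (O : Set ↥A)}
  have hsep : ∀ n : ℕ, ∃ u : Set N, IsClopen u ∧
      (Subtype.val '' ((g n).1 : Set ↥A)) ⊆ u ∧
      Disjoint u (Subtype.val '' (((g n).1 : Set ↥A)ᶜ)) := by
    intro n
    have hKcomp : IsCompact (Subtype.val '' ((g n).1 : Set ↥A)) :=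
      (((g n).1.isClosed_of_isOpen (g n).2).isCompact).image continuous_subtype_val
    have hK'comp : IsCompact (Subtype.val '' (((g n).1 : Set ↥A)ᶜ)) :=
      (((g n).2.isClosed_compl).isCompact).image continuous_subtype_val
    have hdisj : Disjoint (Subtype.val '' ((g n).1 : Set ↥A))
        (Subtype.val '' (((g n).1 : Set ↥A)ᶜ)) := by
      rw [Set.disjoint_left]
      rintro z ⟨a, ha, rfl⟩ ⟨b, hb, hba⟩
      exact hb (by rwa [Subtype.val_injective hba])
    exact clopen_separation hzd hKcomp hK'comp.isClosed hdisj
  choose u huc hus hud using hsep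
  refine ⟨u, huc, ?_, ?_⟩
  · intro n
    exact hus n ⟨0, zero_mem _, rfl⟩
  · intro z hzA hzu
    have hzA' : z ∈ A := hzA
    set zA : ↥A := ⟨z, hzA'⟩ with hzAdef
    have hmem : ∀ O : AddSubgroup ↥A, IsOpen (O : Set ↥A) → zA ∈ O := by
      intro O hO
      obtain ⟨n, hn⟩ := hg ⟨O, hO⟩
      by_contra hc
      have : z ∈ Subtype.val '' (((g n).1 : Set ↥A)ᶜ) := by
        refine ⟨zA, ?_, rfl⟩
        rw [hn]
        exact hc
      exact (Set.disjoint_left.mp (hud n) (hzu n)) this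
    have hz0 : zA = 0 := by
      apply mem_openSubgroups_eq_zero
      · intro U hU h0
        obtain ⟨U', hU', hUeq⟩ := isOpen_induced_iff.mp hU
        have h0' : (0 : N) ∈ U' := by
          rw [← hUeq] at h0
          exact h0
        obtain ⟨W', hW', h0W, hWsub⟩ := hzd.exists_subset_of_mem_open h0' hU'
        refine ⟨Subtype.val ⁻¹' W', hW'.preimage continuous_subtype_val, h0W, ?_⟩
        rw [← hUeq]
        exact fun a ha => hWsub ha
      · exact hmem
    have : (zA : N) = ((0 : ↥A) : N) := by rw [hz0]
    exact this

end ClopenSeq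
section Main

variable {N : Type*} [AddGroup N] [TopologicalSpace N] [IsTopologicalAddGroup N]
  [CompactSpace N] [T2Space N]

lemma exists_at_height (hzd : IsTopologicalBasis {s : Set N | IsClopen s})
    (G : AddSubgroup (N × ℝ)) (hdense : Dense (G : Set (N × ℝ)))
    (hG : ∀ H : AddSubgroup G, IsClosed (H : Set G) → AddLocallyPseudocompact H) :
    ∀ t : ℝ, ∃ x : N, (x, t) ∈ G := by
  obtain ⟨C, hCsub, hCpsc, V, hV, hVC⟩ := extract_psc G hG ⊤
    (by rw [AddSubgroup.coe_top]; exact isClosed_univ)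
  rw [show (0 : N × ℝ) = ((0 : N), (0 : ℝ)) from rfl] at hV
  obtain ⟨W₀, hW₀, I₀, hI₀, hWI⟩ := mem_nhds_prod_iff.mp hV
  obtain ⟨ε, hε0, hball⟩ := Metric.mem_nhds_iff.mp hI₀
  obtain ⟨W₀', hsubW, hWopen, h0W⟩ := mem_nhds_iff.mp hW₀
  intro t
  have hne : ((Set.univ : Set N) ×ˢ Ioo (t - ε/2) (t + ε/2)).Nonempty := by
    refine ⟨((0 : N), t), ?_⟩
    rw [Set.mem_prod, Set.mem_Ioo]
    refine ⟨trivial, ?_, ?_⟩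
    · linarith
    · linarith
  obtain ⟨g, hgG, hgmem'⟩ := hdense.exists_mem_open (isOpen_univ.prod isOpen_Ioo) hne
  have hgmem : g.2 ∈ Ioo (t - ε/2) (t + ε/2) := hgmem'.2
  set τ := t - g.2 with hτdef
  have hτabs : |τ| < ε/2 := by
    rw [hτdef, abs_lt]
    constructor
    · linarith [hgmem.2]
    · linarith [hgmem.1]
  set η : ℕ → ℝ := fun n => ε/2 / (n+1) with hηdef
  have hη0 : ∀ n : ℕ, 0 < η n := fun n => by positivity
  have hηle : ∀ n : ℕ, η n ≤ ε/2 := by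
    intro n
    rw [hηdef]
    apply div_le_self (by linarith)
    push_cast; linarith [Nat.cast_nonneg (α := ℝ) n]
  have hηanti : ∀ m n : ℕ, m ≤ n → η n ≤ η m := by
    intro m n hmn
    have hcast : (m : ℝ) + 1 ≤ (n : ℝ) + 1 := by
      have : (m : ℝ) ≤ (n : ℝ) := by exact_mod_cast hmn
      linarith
    exact div_le_div_of_nonneg_left (by linarith) (by positivity) hcast
  set R : ℕ → Set ↥C := fun n => (fun c : ↥C => (c : N × ℝ).2) ⁻¹' Ioo (τ - η n) (τ + η n)
    with hRdef
  have hRo : ∀ n, IsOpen (R n) :=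
    fun n => isOpen_Ioo.preimage (continuous_snd.comp continuous_subtype_val)
  have hRne : ∀ n, (R n).Nonempty := by
    intro n
    have hne2 : (W₀' ×ˢ Ioo (τ - η n) (τ + η n)).Nonempty := by
      refine ⟨((0 : N), τ), ?_⟩
      rw [Set.mem_prod, Set.mem_Ioo]
      refine ⟨h0W, ?_, ?_⟩
      · linarith [hη0 n]
      · linarith [hη0 n]
    obtain ⟨z, hzG, hzmem⟩ := hdense.exists_mem_open (hWopen.prod isOpen_Ioo) hne2
    have hz1 : z.1 ∈ W₀' := hzmem.1
    have hz2 : z.2 ∈ Ioo (τ - η n) (τ + η n) := hzmem.2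
    have hzC : z ∈ C := by
      apply hVC z hzG trivial
      apply hWI
      refine ⟨hsubW hz1, hball ?_⟩
      rw [Metric.mem_ball, Real.dist_eq, sub_zero]
      have h1 := hz2.1; have h2 := hz2.2
      rw [abs_lt]
      have := abs_lt.mp hτabs
      have := hηle n
      constructor
      · linarith
      · linarith
    exact ⟨⟨z, hzC⟩, hz2⟩
  have hRdec : ∀ m n : ℕ, m ≤ n → R n ⊆ R m := by
    intro m n hmn c hc
    have := hηanti m n hmn
    exact ⟨by linarith [hc.1], by linarith [hc.2]⟩
  obtain ⟨xb, hxb⟩ := hCpsc.exists_mem_closure R hRo hRne hRdec (sep_functions hzd C)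
  have hx2 : (xb : N × ℝ).2 = τ := by
    have habs : ∀ n : ℕ, |(xb : N × ℝ).2 - τ| ≤ η n := by
      intro n
      have hsub2 : closure (R n) ⊆ (fun c : ↥C => (c : N × ℝ).2) ⁻¹' Icc (τ - η n) (τ + η n) :=
        closure_minimal (fun c hc => ⟨le_of_lt hc.1, le_of_lt hc.2⟩)
          (isClosed_Icc.preimage (continuous_snd.comp continuous_subtype_val))
      have := hsub2 (hxb n)
      rw [abs_le]
      exact ⟨by linarith [this.1], by linarith [this.2]⟩
    by_contra hne'
    have hd0 : 0 < |(xb : N × ℝ).2 - τ| := abs_pos.mpr (sub_ne_zero.mpr hne')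
    obtain ⟨n, hn⟩ := exists_nat_gt (ε/2 / |(xb : N × ℝ).2 - τ|)
    have h1 := habs n
    have h2 : η n < |(xb : N × ℝ).2 - τ| := by
      rw [hηdef]
      rw [div_lt_iff₀ (by positivity)]
      rw [div_lt_iff₀ hd0] at hn
      nlinarith [hd0, hn]
    linarith
  refine ⟨(g + (xb : N × ℝ)).1, ?_⟩
  have hmemG : g + (xb : N × ℝ) ∈ G := G.add_mem hgG (hCsub xb.2).1
  have : ((g + (xb : N × ℝ)).1, t) = g + (xb : N × ℝ) := by
    refine Prod.ext_iff.mpr ⟨rfl, ?_⟩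
    show t = (g + (xb : N × ℝ)).2
    have h2 : (g + (xb : N × ℝ)).2 = g.2 + (xb : N × ℝ).2 := rfl
    rw [h2, hx2, hτdef]
    ring
  rw [this]
  exact hmemG

end Main
/-- let `N` be a compact zero-dimensional Hausdorff topological group and
`G` a dense subgroup of `N × ℝ` all of whose closed subgroups are locally
pseudocompact.  Then `{0} × ℝ ⊆ G`. -/
theorem line_subset_of_dense_hereditarilyLocallyPseudocompact {N : Type*} [AddGroup N]
    [TopologicalSpace N] [IsTopologicalAddGroup N] [CompactSpace N] [T2Space N]
    (hzd : TopologicalSpace.IsTopologicalBasis {s : Set N | IsClopen s})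
    (G : AddSubgroup (N × ℝ)) (hdense : Dense (G : Set (N × ℝ)))
    (hG : ∀ H : AddSubgroup G, IsClosed (H : Set G) → AddLocallyPseudocompact H) :
    ∀ r : ℝ, ((0 : N), r) ∈ G := by
  classical
  have hE1 := exists_at_height hzd G hdense hG
  obtain ⟨x1, hx1⟩ := hE1 1
  obtain ⟨x2, hx2⟩ := hE1 (Real.sqrt 2)
  obtain ⟨u, huclopen, hu0, hukey⟩ := exists_clopen_seq hzd x1 x2
  set D0 := AddSubgroup.closure ({x1, x2} : Set N) with hD0
  set A := D0.topologicalClosure with hA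
  set F : AddSubgroup (N × ℝ) := A.prod ⊤ with hF
  have hFclosed : IsClosed (F : Set (N × ℝ)) := by
    rw [hF, AddSubgroup.coe_prod, AddSubgroup.coe_top]
    exact (D0.isClosed_topologicalClosure).prod isClosed_univ
  set HA : AddSubgroup (N × ℝ) := G ⊓ F with hHA
  set L : AddSubgroup (N × ℝ) := HA.topologicalClosure with hL
  have hx1A : x1 ∈ A := D0.le_topologicalClosure (AddSubgroup.subset_closure (by simp))
  have hx2A : x2 ∈ A := D0.le_topologicalClosure (AddSubgroup.subset_closure (by simp))
  have hmem1 : ((x1, (1:ℝ)) : N × ℝ) ∈ HA := by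
    rw [hHA, AddSubgroup.mem_inf]
    exact ⟨hx1, AddSubgroup.mem_prod.mpr ⟨hx1A, trivial⟩⟩
  have hmem2 : ((x2, Real.sqrt 2) : N × ℝ) ∈ HA := by
    rw [hHA, AddSubgroup.mem_inf]
    exact ⟨hx2, AddSubgroup.mem_prod.mpr ⟨hx2A, trivial⟩⟩
  have hL1 : ((x1, (1:ℝ)) : N × ℝ) ∈ L := HA.le_topologicalClosure hmem1
  have hL2 : ((x2, Real.sqrt 2) : N × ℝ) ∈ L := HA.le_topologicalClosure hmem2
  -- dense snd image
  have hdsnd : Dense (Prod.snd '' (L : Set (N × ℝ))) := by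
    rcases AddSubgroup.dense_or_cyclic (L.map (AddMonoidHom.snd N ℝ)) with hd | ⟨a, ha⟩
    · have hset : ((L.map (AddMonoidHom.snd N ℝ)) : Set ℝ) = Prod.snd '' (L : Set (N × ℝ)) := by
        rw [AddSubgroup.coe_map]
        rfl
      rwa [hset] at hd
    · exfalso
      have h1 : (1:ℝ) ∈ L.map (AddMonoidHom.snd N ℝ) := ⟨(x1, 1), hL1, rfl⟩
      have h2 : Real.sqrt 2 ∈ L.map (AddMonoidHom.snd N ℝ) := ⟨(x2, Real.sqrt 2), hL2, rfl⟩
      rw [ha, AddSubgroup.mem_closure_singleton] at h1 h2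
      obtain ⟨k, hk⟩ := h1
      obtain ⟨l, hl⟩ := h2
      rw [zsmul_eq_mul] at hk hl
      have hk0 : (k : ℝ) ≠ 0 := by
        intro h
        rw [h, zero_mul] at hk
        exact one_ne_zero hk.symm
      apply irrational_sqrt_two
      refine ⟨(l : ℚ) / (k : ℚ), ?_⟩
      have hkQ : ((k : ℚ) : ℝ) ≠ 0 := by push_cast; exact hk0
      rw [Rat.cast_div]
      push_cast
      rw [div_eq_iff (by push_cast at hkQ ⊢; exact hkQ)]
      -- √2 * k = l : from k * a = 1 and l * a = √2
      have ha0 : a ≠ 0 := by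
        intro h
        rw [h, mul_zero] at hk
        exact one_ne_zero hk.symm
      have : (l : ℝ) * a * (k : ℝ) = Real.sqrt 2 * ((k:ℝ) * a) * (k : ℝ) := by
        rw [hl, hk]
        ring
      rw [hk] at this
      have hfin : (l : ℝ) * a * (k : ℝ) = Real.sqrt 2 * (k : ℝ) := by
        rw [this]; ring
      have : (l : ℝ) * ((k : ℝ) * a) = Real.sqrt 2 * (k : ℝ) := by
        rw [← hfin]; ring
      rw [hk, mul_one] at this
      linarith [this]
  -- the line is inside L
  have hLclosed : IsClosed (L : Set (N × ℝ)) := AddSubgroup.isClosed_topologicalClosure HA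
  have hline : ∀ s : ℝ, ((0:N), s) ∈ L := fun s => line_mem_of_closed hzd L hLclosed hdsnd s
  -- extraction for F
  obtain ⟨C, hCsub, hCpsc, V, hV, hVC⟩ := extract_psc G hG F hFclosed
  rw [show (0 : N × ℝ) = ((0 : N), (0 : ℝ)) from rfl] at hV
  obtain ⟨W₀, hW₀, I₀, hI₀, hWI⟩ := mem_nhds_prod_iff.mp hV
  obtain ⟨ε, hε0, hball⟩ := Metric.mem_nhds_iff.mp hI₀
  obtain ⟨V₂, hV₂, hV₂add⟩ := exists_nhds_zero_half hW₀
  obtain ⟨V₂', hV₂'sub, hV₂'open, h0V₂'⟩ := mem_nhds_iff.mp hV₂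
  set W₁ : Set N := V₂' ∩ (-V₂') with hW₁
  have hW₁open : IsOpen W₁ := hV₂'open.inter hV₂'open.neg
  have h0W₁ : (0:N) ∈ W₁ := ⟨h0V₂', by simpa using h0V₂'⟩
  have hW₁sub : W₁ ⊆ V₂' := Set.inter_subset_left
  have hW₁neg : ∀ x ∈ W₁, -x ∈ W₁ := by
    rintro x ⟨h1, h2⟩
    refine ⟨by simpa using h2, by simpa using h1⟩
  intro r
  -- choose h close to (0, r)
  set T : Set (N × ℝ) := (fun z : N × ℝ => -z + ((0:N), r)) ⁻¹' (W₁ ×ˢ Ioo (-(ε/2)) (ε/2))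
    with hT
  have hTopen : IsOpen T :=
    (hW₁open.prod isOpen_Ioo).preimage (continuous_neg.add continuous_const)
  have hTr : ((0:N), r) ∈ T := by
    show -((0:N), r) + ((0:N), r) ∈ W₁ ×ˢ Ioo (-(ε/2)) (ε/2)
    rw [neg_add_cancel]
    refine ⟨h0W₁, ?_, ?_⟩ <;> simp [hε0] <;> linarith
  have hrcl : ((0:N), r) ∈ closure (HA : Set (N × ℝ)) := by
    rw [← AddSubgroup.topologicalClosure_coe]
    exact hline r
  obtain ⟨z0, hz0T, hz0HA⟩ := (_root_.mem_closure_iff.mp hrcl) T hTopen hTr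
  set h : N × ℝ := z0 with hh
  have hhHA : h ∈ HA := hz0HA
  set w : N × ℝ := -h + ((0:N), r) with hw
  have hwmem : w ∈ W₁ ×ˢ Ioo (-(ε/2)) (ε/2) := hz0T
  set y : N := w.1 with hy
  set τ : ℝ := w.2 with hτ
  have hyW₁ : y ∈ W₁ := hwmem.1
  have hτIoo : τ ∈ Ioo (-(ε/2)) (ε/2) := hwmem.2
  have hτabs : |τ| < ε/2 := abs_lt.mpr ⟨by linarith [hτIoo.1], hτIoo.2⟩
  have hhF : h ∈ F := ((AddSubgroup.mem_inf).mp hhHA).2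
  have hh1A : h.1 ∈ A := (AddSubgroup.mem_prod.mp hhF).1
  have hyA : y ∈ A := by
    have : y = -h.1 + 0 := rfl
    rw [this, add_zero]
    exact A.neg_mem hh1A
  -- w ∈ closure HA
  have hwL : w ∈ L := L.add_mem (L.neg_mem (HA.le_topologicalClosure hhHA)) (hline r)
  have hwcl : w ∈ closure (HA : Set (N × ℝ)) := by
    rw [← AddSubgroup.topologicalClosure_coe]
    exact hwL
  -- the shrinking system
  set Uhat : ℕ → Set N := fun n => W₁ ∩ ⋂ k ∈ Finset.range (n+1), u k with hUhat
  have hUopen : ∀ n, IsOpen (Uhat n) := by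
    intro n
    exact hW₁open.inter (isOpen_biInter_finset (fun k _ => (huclopen k).2))
  have h0U : ∀ n, (0:N) ∈ Uhat n := by
    intro n
    exact ⟨h0W₁, Set.mem_biInter (fun k _ => hu0 k)⟩
  have hUanti : ∀ m n : ℕ, m ≤ n → Uhat n ⊆ Uhat m := by
    intro m n hmn x hx
    refine ⟨hx.1, ?_⟩
    have := hx.2
    rw [Set.mem_iInter₂] at this ⊢
    intro k hk
    exact this k (Finset.mem_range.mpr (lt_of_lt_of_le (Finset.mem_range.mp hk) (by omega)))
  set η : ℕ → ℝ := fun n => ε/2 / (n+1) with hηdef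
  have hη0 : ∀ n : ℕ, 0 < η n := fun n => by positivity
  have hηle : ∀ n : ℕ, η n ≤ ε/2 := by
    intro n
    rw [hηdef]
    apply div_le_self (by linarith)
    linarith [Nat.cast_nonneg (α := ℝ) n]
  have hηanti : ∀ m n : ℕ, m ≤ n → η n ≤ η m := by
    intro m n hmn
    have hcast : (m : ℝ) + 1 ≤ (n : ℝ) + 1 := by
      have : (m : ℝ) ≤ (n : ℝ) := by exact_mod_cast hmn
      linarith
    exact div_le_div_of_nonneg_left (by linarith) (by positivity) hcast
  set R : ℕ → Set ↥C := fun n =>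
    ((fun c : ↥C => -y + (c : N × ℝ).1) ⁻¹' Uhat n) ∩
    ((fun c : ↥C => (c : N × ℝ).2) ⁻¹' Ioo (τ - η n) (τ + η n)) with hR
  have hRo : ∀ n, IsOpen (R n) := by
    intro n
    apply IsOpen.inter
    · exact (hUopen n).preimage
        (continuous_const.add (continuous_fst.comp continuous_subtype_val))
    · exact isOpen_Ioo.preimage (continuous_snd.comp continuous_subtype_val)
  have hRne : ∀ n, (R n).Nonempty := by
    intro n
    set T' : Set (N × ℝ) := ((fun z : N × ℝ => -y + z.1) ⁻¹' Uhat n) ∩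
      ((fun z : N × ℝ => z.2) ⁻¹' Ioo (τ - η n) (τ + η n)) with hT'
    have hT'open : IsOpen T' := by
      apply IsOpen.inter
      · exact (hUopen n).preimage (continuous_const.add continuous_fst)
      · exact isOpen_Ioo.preimage continuous_snd
    have hT'w : w ∈ T' := by
      constructor
      · show -y + w.1 ∈ Uhat n
        rw [← hy, neg_add_cancel]
        exact h0U n
      · show w.2 ∈ Ioo (τ - η n) (τ + η n)
        rw [← hτ]
        exact ⟨by linarith [hη0 n], by linarith [hη0 n]⟩
    obtain ⟨z, hzT', hzHA⟩ := (_root_.mem_closure_iff.mp hwcl) T' hT'open hT'w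
    have hzG : z ∈ G := ((AddSubgroup.mem_inf).mp hzHA).1
    have hzF : z ∈ F := ((AddSubgroup.mem_inf).mp hzHA).2
    have hzC : z ∈ C := by
      apply hVC z hzG hzF
      apply hWI
      constructor
      · show z.1 ∈ W₀
        have hz1 : -y + z.1 ∈ Uhat n := hzT'.1
        have : z.1 = y + (-y + z.1) := by rw [add_neg_cancel_left]
        rw [this]
        exact hV₂add y (hV₂'sub (hW₁sub hyW₁)) (-y + z.1) (hV₂'sub (hW₁sub hz1.1))
      · show z.2 ∈ I₀
        apply hball
        rw [Metric.mem_ball, Real.dist_eq, sub_zero]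
        have hz2 := hzT'.2
        have h1 : τ - η n < z.2 := hz2.1
        have h2 : z.2 < τ + η n := hz2.2
        have := abs_lt.mp hτabs
        rw [abs_lt]
        constructor
        · linarith [hηle n]
        · linarith [hηle n]
    exact ⟨⟨z, hzC⟩, hzT'⟩
  have hRdec : ∀ m n : ℕ, m ≤ n → R n ⊆ R m := by
    intro m n hmn c hc
    refine ⟨hUanti m n hmn hc.1, ?_⟩
    have h1 := hc.2.1
    have h2 := hc.2.2
    have := hηanti m n hmn
    exact ⟨by linarith, by linarith⟩
  obtain ⟨xb, hxb⟩ := hCpsc.exists_mem_closure R hRo hRne hRdec (sep_functions hzd C)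
  -- pin the second coordinate
  have hx2c : (xb : N × ℝ).2 = τ := by
    have habs : ∀ n : ℕ, |(xb : N × ℝ).2 - τ| ≤ η n := by
      intro n
      have hsub2 : closure (R n) ⊆ (fun c : ↥C => (c : N × ℝ).2) ⁻¹' Icc (τ - η n) (τ + η n) :=
        closure_minimal (fun c hc => ⟨le_of_lt hc.2.1, le_of_lt hc.2.2⟩)
          (isClosed_Icc.preimage (continuous_snd.comp continuous_subtype_val))
      have := hsub2 (hxb n)
      rw [abs_le]
      exact ⟨by linarith [this.1], by linarith [this.2]⟩
    by_contra hne'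
    have hd0 : 0 < |(xb : N × ℝ).2 - τ| := abs_pos.mpr (sub_ne_zero.mpr hne')
    obtain ⟨n, hn⟩ := exists_nat_gt (ε/2 / |(xb : N × ℝ).2 - τ|)
    have h1 := habs n
    have h2 : η n < |(xb : N × ℝ).2 - τ| := by
      rw [hηdef]
      rw [div_lt_iff₀ (by positivity)]
      rw [div_lt_iff₀ hd0] at hn
      nlinarith [hd0, hn]
    linarith
  -- pin the first coordinate
  have hx1c : (xb : N × ℝ).1 = y := by
    have hmem' : ∀ k : ℕ, -y + (xb : N × ℝ).1 ∈ u k := by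
      intro k
      have hsub1 : closure (R k) ⊆ (fun c : ↥C => -y + (c : N × ℝ).1) ⁻¹' u k := by
        apply closure_minimal
        · intro c hc
          have := hc.1.2
          rw [Set.mem_iInter₂] at this
          exact this k (Finset.mem_range.mpr (by omega))
        · exact ((huclopen k).1).preimage
            (continuous_const.add (continuous_fst.comp continuous_subtype_val))
      exact hsub1 (hxb k)
    have hxbA : (xb : N × ℝ).1 ∈ A := by
      have := (hCsub xb.2).2
      have hF' : (xb : N × ℝ) ∈ F := this
      exact (AddSubgroup.mem_prod.mp hF').1
    have hzA : -y + (xb : N × ℝ).1 ∈ A := A.add_mem (A.neg_mem hyA) hxbA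
    have := hukey (-y + (xb : N × ℝ).1) hzA hmem'
    have heq : y + (-y + (xb : N × ℝ).1) = y + 0 := by rw [this]
    rw [add_neg_cancel_left, add_zero] at heq
    exact heq
  -- conclude
  have hxbw : (xb : N × ℝ) = w := by
    apply Prod.ext_iff.mpr
    exact ⟨hx1c, hx2c⟩
  have hxbG : (xb : N × ℝ) ∈ G := (hCsub xb.2).1
  have hhG : h ∈ G := ((AddSubgroup.mem_inf).mp hhHA).1
  have : h + (xb : N × ℝ) ∈ G := G.add_mem hhG hxbG
  rwa [hxbw, hw, add_neg_cancel_left] at this
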